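/- Let n ≥ 1 and let Γ be a finite subgroup of the unitary group U_n(ℂ). Then there exists a function G, analytic on a neighborhood N of 1 in ℂ, such that G(x) = (1 − x)^{2n}·M_Γ(x) for all x ∈ N with |x| < 1, and moreover G(1) = 1/|Γ| and G′(1) = 0. (Equivalently: the Hilbert series of the real invariants of Γ has a pole of order exactly 2n at x = 1 with Laurent coefficients γ_0 = 1/|Γ| and γ_1 = 0.) -/

import Mathlib

open Filter Topology Finset

open Polynomial

namespace MolienAux

lemma eval_charpoly {n : ℕ} (B : Matrix (Fin n) (Fin n) ℂ) (x : ℂ) :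
    (Matrix.charpoly B).eval x
      = Matrix.det (x • (1 : Matrix (Fin n) (Fin n) ℂ) - B) := by
  rw [Matrix.charpoly, ← Polynomial.coe_evalRingHom, RingHom.map_det]
  congr 1
  ext i j
  rcases eq_or_ne i j with rfl | h
  · simp [Matrix.charmatrix_apply_eq, Matrix.one_apply]
  · simp [Matrix.charmatrix_apply_ne _ _ _ h, Matrix.one_apply, h]

lemma det_one_sub_smul {n : ℕ} (A B : Matrix (Fin n) (Fin n) ℂ) (h : A * B = 1) (x : ℂ) :
    Matrix.det (1 - x • A) = (-1 : ℂ) ^ n * Matrix.det A * (Matrix.charpoly B).eval x := by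
  have key : (1 : Matrix (Fin n) (Fin n) ℂ) - x • A = -(A * (x • 1 - B)) := by
    rw [Matrix.mul_sub, Matrix.mul_smul, Matrix.mul_one, h, neg_sub]
  rw [key, Matrix.det_neg, Fintype.card_fin, Matrix.det_mul, eval_charpoly]
  ring

lemma charpoly_one {n : ℕ} :
    (1 : Matrix (Fin n) (Fin n) ℂ).charpoly = (X - C 1) ^ n := by
  have h1 : Matrix.charmatrix (1 : Matrix (Fin n) (Fin n) ℂ)
      = Matrix.diagonal (fun _ => (X : ℂ[X]) - C 1) := by
    ext i j
    rcases eq_or_ne i j with rfl | h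
    · simp [Matrix.charmatrix_apply_eq]
    · simp [Matrix.charmatrix_apply_ne _ _ _ h, Matrix.one_apply, h]
  rw [Matrix.charpoly, h1, Matrix.det_diagonal, Finset.prod_const, Finset.card_univ,
    Fintype.card_fin]

lemma eq_one_of_charpoly {n : ℕ} (hn : 1 ≤ n) (A : Matrix (Fin n) (Fin n) ℂ) (k : ℕ)
    (hk : 0 < k) (hAk : A ^ k = 1)
    (hcp : Matrix.charpoly A = (X - C 1) ^ n) : A = 1 := by
  haveI : Nonempty (Fin n) := ⟨⟨0, hn⟩⟩
  have hint : IsIntegral ℂ A := Matrix.isIntegral A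
  have h1 : minpoly ℂ A ∣ (X - C 1) ^ n := hcp ▸ Matrix.minpoly_dvd_charpoly A
  obtain ⟨j, hj, hassoc⟩ := (dvd_prime_pow (Polynomial.prime_X_sub_C (1 : ℂ)) n).mp h1
  have hmin : minpoly ℂ A = (X - C 1) ^ j :=
    Polynomial.eq_of_monic_of_associated (minpoly.monic hint)
      ((Polynomial.monic_X_sub_C (1 : ℂ)).pow j) hassoc
  have hdvd2 : minpoly ℂ A ∣ X ^ k - C 1 := minpoly.dvd _ _ (by
    simp [map_pow, hAk, sub_eq_zero])
  have hsq : Squarefree ((X : ℂ[X]) ^ k - C 1) :=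
    (Polynomial.separable_X_pow_sub_C (1 : ℂ) (by exact_mod_cast hk.ne') one_ne_zero).squarefree
  have hjpos : 0 < j := by
    rcases Nat.eq_zero_or_pos j with hj0 | hj0
    · exfalso
      have := minpoly.natDegree_pos hint
      rw [hmin, hj0, pow_zero] at this
      simp at this
    · exact hj0
  have hj1 : j = 1 := by
    by_contra hne
    have h2j : 2 ≤ j := by omega
    have : (X - C 1) * (X - C 1) ∣ (X : ℂ[X]) ^ k - C 1 := by
      refine dvd_trans ?_ (hmin ▸ hdvd2)
      have : (X - C (1:ℂ)) * (X - C 1) = (X - C 1) ^ 2 := by ring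
      rw [this]
      exact pow_dvd_pow _ h2j
    exact Polynomial.not_isUnit_X_sub_C (1 : ℂ) (hsq _ this)
  have haev : Polynomial.aeval A (minpoly ℂ A) = 0 := minpoly.aeval ℂ A
  rw [hmin, hj1, pow_one] at haev
  have : A - 1 = 0 := by simpa [sub_eq_zero] using haev
  rw [sub_eq_zero] at this
  exact this

lemma rootMultiplicity_lt {n : ℕ} (hn : 1 ≤ n) (A : Matrix (Fin n) (Fin n) ℂ) (k : ℕ)
    (hk : 0 < k) (hAk : A ^ k = 1) (hA : A ≠ 1) :
    Polynomial.rootMultiplicity 1 (Matrix.charpoly A) < n := by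
  haveI : Nonempty (Fin n) := ⟨⟨0, hn⟩⟩
  have hmono : (Matrix.charpoly A).Monic := Matrix.charpoly_monic A
  have hne : Matrix.charpoly A ≠ 0 := hmono.ne_zero
  have hdeg : (Matrix.charpoly A).natDegree = n := by
    rw [Matrix.charpoly_natDegree_eq_dim, Fintype.card_fin]
  have hle : rootMultiplicity 1 (Matrix.charpoly A) ≤ n := by
    have := Polynomial.natDegree_le_of_dvd (Polynomial.pow_rootMultiplicity_dvd _ 1) hne
    rwa [Polynomial.natDegree_pow, Polynomial.natDegree_X_sub_C, mul_one, hdeg] at this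
  rcases lt_or_eq_of_le hle with h | h
  · exact h
  · exfalso
    apply hA
    apply eq_one_of_charpoly hn A k hk hAk
    have hdvd : ((X : ℂ[X]) - C 1) ^ n ∣ Matrix.charpoly A := by
      have := Polynomial.pow_rootMultiplicity_dvd (Matrix.charpoly A) 1
      rwa [h] at this
    have e1 : (Matrix.charpoly A).natDegree ≤ (((X : ℂ[X]) - C 1) ^ n).natDegree := by
      rw [hdeg, Polynomial.natDegree_pow, Polynomial.natDegree_X_sub_C, mul_one]
    have e2 : (((X : ℂ[X]) - C 1) ^ n).leadingCoeff = (Matrix.charpoly A).leadingCoeff := by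
      rw [((Polynomial.monic_X_sub_C (1:ℂ)).pow n).leadingCoeff, hmono.leadingCoeff]
    exact (Polynomial.eq_of_dvd_of_natDegree_le_of_leadingCoeff hdvd e1 e2).symm

end MolienAux

open MolienAux

/-- for a finite subgroup `Γ` of `U_n(ℂ)`, the Molien series of real
invariants `M_Γ(x) = (1/|Γ|) Σ_{g∈Γ} 1/(det(I - xg)·det(I - xg⁻¹))` has an analytic
extension `G` of `(1-x)^{2n} M_Γ(x)` near `x = 1` with `G(1) = 1/|Γ|` (i.e. `γ₀ = 1/|Γ|`)
and `G′(1) = 0` (i.e. `γ₁ = 0`). -/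
theorem molien_series_real_invariants_leading_coefficients (n : ℕ) (hn : 1 ≤ n)
    (Γ : Subgroup (Matrix.unitaryGroup (Fin n) ℂ)) [Fintype Γ] :
    ∃ (G : ℂ → ℂ) (N : Set ℂ), N ∈ 𝓝 (1 : ℂ) ∧ AnalyticOnNhd ℂ G N ∧
      (∀ x ∈ N, ‖x‖ < 1 →
        G x = (1 - x) ^ (2 * n) *
          ((Fintype.card Γ : ℂ)⁻¹ * ∑ g : Γ,
            (Matrix.det (1 - x • ((g : Matrix.unitaryGroup (Fin n) ℂ) :
                Matrix (Fin n) (Fin n) ℂ)) *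
              Matrix.det (1 - x • (((g⁻¹ : Γ) : Matrix.unitaryGroup (Fin n) ℂ) :
                Matrix (Fin n) (Fin n) ℂ)))⁻¹)) ∧
      G 1 = (Fintype.card Γ : ℂ)⁻¹ ∧
      deriv G 1 = 0 := by
  classical
  haveI : Nonempty (Fin n) := ⟨⟨0, hn⟩⟩
  set k := Fintype.card Γ with hkdef
  have hkpos : 0 < k := Fintype.card_pos
  let A : Γ → Matrix (Fin n) (Fin n) ℂ := fun g =>
    ((g : Matrix.unitaryGroup (Fin n) ℂ) : Matrix (Fin n) (Fin n) ℂ)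
  have hAmul : ∀ g h : Γ, A (g * h) = A g * A h := by
    intro g h; simp [A]
  have hAone : A 1 = 1 := by simp [A]
  have hAinv : ∀ g : Γ, A g * A g⁻¹ = 1 := fun g => by
    rw [← hAmul, mul_inv_cancel, hAone]
  have hAinv' : ∀ g : Γ, A g⁻¹ * A g = 1 := fun g => by
    rw [← hAmul, inv_mul_cancel, hAone]
  have hApow : ∀ g : Γ, A g ^ k = 1 := by
    intro g
    have h1 : g ^ k = 1 := pow_card_eq_one
    have h2 : A (g ^ k) = A g ^ k := by
      induction k with
      | zero => simpa using hAone
      | succ j ih => rw [pow_succ, pow_succ, hAmul, ih]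
    rw [← h2, h1, hAone]
  have hAinj : ∀ g : Γ, A g ≠ 1 ↔ g ≠ 1 := by
    intro g
    constructor
    · intro h hg; exact h (hg ▸ hAone)
    · intro hg h
      apply hg
      have h1 : (g : Matrix.unitaryGroup (Fin n) ℂ)
          = ((1 : Γ) : Matrix.unitaryGroup (Fin n) ℂ) := by
        apply Subtype.coe_injective
        simpa [A] using h
      exact Subtype.coe_injective h1
  -- the denominator polynomials
  let D : Γ → Polynomial ℂ := fun g => (A g).charpoly * (A g⁻¹).charpoly
  have hDmonic : ∀ g, (D g).Monic := fun g =>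
    (Matrix.charpoly_monic _).mul (Matrix.charpoly_monic _)
  have hDne : ∀ g, D g ≠ 0 := fun g => (hDmonic g).ne_zero
  let m : Γ → ℕ := fun g => (D g).rootMultiplicity 1
  let S : Γ → Polynomial ℂ := fun g => (D g) /ₘ ((X - C 1) ^ (m g))
  have hfact : ∀ g, ((X : ℂ[X]) - C 1) ^ (m g) * S g = D g := fun g =>
    Polynomial.pow_mul_divByMonic_rootMultiplicity_eq _ _
  have hS1 : ∀ g, (S g).eval 1 ≠ 0 := fun g =>
    Polynomial.eval_divByMonic_pow_rootMultiplicity_ne_zero 1 (hDne g)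
  have hDdeg : ∀ g, (D g).natDegree = 2 * n := by
    intro g
    rw [Polynomial.natDegree_mul (Matrix.charpoly_monic _).ne_zero
      (Matrix.charpoly_monic _).ne_zero, Matrix.charpoly_natDegree_eq_dim,
      Matrix.charpoly_natDegree_eq_dim, Fintype.card_fin]
    ring
  have hmle : ∀ g, m g ≤ 2 * n := by
    intro g
    have := Polynomial.natDegree_le_of_dvd
      (Polynomial.pow_rootMultiplicity_dvd (D g) 1) (hDne g)
    rwa [Polynomial.natDegree_pow, Polynomial.natDegree_X_sub_C, mul_one, hDdeg] at this
  have hmsplit : ∀ g, m g = (A g).charpoly.rootMultiplicity 1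
      + (A g⁻¹).charpoly.rootMultiplicity 1 := fun g =>
    Polynomial.rootMultiplicity_mul (hDne g)
  have hm1 : m 1 = 2 * n := by
    have hD1 : D 1 = ((X : ℂ[X]) - C 1) ^ (2 * n) := by
      show (A 1).charpoly * (A 1⁻¹).charpoly = _
      rw [inv_one, hAone, charpoly_one, ← pow_add, two_mul]
    show (D 1).rootMultiplicity 1 = 2 * n
    rw [hD1, Polynomial.rootMultiplicity_X_sub_C_pow]
  have hS1poly : S 1 = 1 := by
    have h := hfact 1
    rw [hm1] at h
    have hD1 : D 1 = ((X : ℂ[X]) - C 1) ^ (2 * n) := by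
      show (A 1).charpoly * (A 1⁻¹).charpoly = _
      rw [inv_one, hAone, charpoly_one, ← pow_add, two_mul]
    rw [hD1] at h
    have hne : ((X : ℂ[X]) - C 1) ^ (2 * n) ≠ 0 :=
      pow_ne_zero _ (Polynomial.X_sub_C_ne_zero 1)
    have : ((X : ℂ[X]) - C 1) ^ (2 * n) * S 1
        = ((X : ℂ[X]) - C 1) ^ (2 * n) * 1 := by rw [h, mul_one]
    exact mul_left_cancel₀ hne this
  have hmlt : ∀ g : Γ, g ≠ 1 → m g + 2 ≤ 2 * n := by
    intro g hg
    have h1 : (A g).charpoly.rootMultiplicity 1 < n :=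
      rootMultiplicity_lt hn (A g) k hkpos (hApow g) ((hAinj g).mpr hg)
    have h2 : (A g⁻¹).charpoly.rootMultiplicity 1 < n :=
      rootMultiplicity_lt hn (A g⁻¹) k hkpos (hApow g⁻¹)
        ((hAinj g⁻¹).mpr (by simpa using hg))
    rw [hmsplit g]
    omega
  -- the neighbourhood and the function
  let N : Set ℂ := ⋂ g : Γ, {x : ℂ | (S g).eval x ≠ 0}
  have hNopen : IsOpen N := by
    apply isOpen_iInter_of_finite
    intro g
    exact isOpen_compl_singleton.preimage (Polynomial.continuous (S g))
  have h1N : (1 : ℂ) ∈ N := Set.mem_iInter.mpr fun g => hS1 g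
  have hxN : ∀ x ∈ N, ∀ g : Γ, (S g).eval x ≠ 0 := fun x hx g => Set.mem_iInter.mp hx g
  let G : ℂ → ℂ := fun x => (k : ℂ)⁻¹ *
    ∑ g : Γ, (-1 : ℂ) ^ (m g) * (1 - x) ^ (2 * n - m g) * ((S g).eval x)⁻¹
  refine ⟨G, N, hNopen.mem_nhds h1N, ?_, ?_, ?_, ?_⟩
  · -- analytic
    apply DifferentiableOn.analyticOnNhd ?_ hNopen
    apply DifferentiableOn.const_mul
    apply DifferentiableOn.fun_sum
    intro g _
    apply DifferentiableOn.mul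
    · exact (((differentiable_const (1:ℂ)).sub differentiable_id).pow _).differentiableOn.const_mul _
    · exact DifferentiableOn.inv (Polynomial.differentiable (S g)).differentiableOn
        (fun x hx => hxN x hx g)
  · -- the functional equation
    intro x hx hxlt
    have hx1 : (1 : ℂ) - x ≠ 0 := by
      intro h
      rw [sub_eq_zero] at h
      rw [← h] at hxlt
      simp at hxlt
    have hdet : ∀ g : Γ,
        Matrix.det (1 - x • ((g : Matrix.unitaryGroup (Fin n) ℂ) :
            Matrix (Fin n) (Fin n) ℂ)) *
          Matrix.det (1 - x • (((g⁻¹ : Γ) : Matrix.unitaryGroup (Fin n) ℂ) :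
            Matrix (Fin n) (Fin n) ℂ)) = (D g).eval x := by
      intro g
      have e1 := det_one_sub_smul (A g) (A g⁻¹) (hAinv g) x
      have e2 := det_one_sub_smul (A g⁻¹) (A g) (hAinv' g) x
      show Matrix.det (1 - x • A g) * Matrix.det (1 - x • A g⁻¹) = _
      rw [e1, e2]
      have hdet1 : Matrix.det (A g) * Matrix.det (A g⁻¹) = 1 := by
        rw [← Matrix.det_mul, hAinv g, Matrix.det_one]
      have hneg : ((-1 : ℂ) ^ n) * ((-1 : ℂ) ^ n) = 1 := by
        rw [← pow_add, ← two_mul, pow_mul]; norm_num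
      show _ = ((A g).charpoly * (A g⁻¹).charpoly).eval x
      rw [Polynomial.eval_mul]
      calc (-1 : ℂ) ^ n * (A g).det * ((A g⁻¹).charpoly.eval x) *
            ((-1 : ℂ) ^ n * (A g⁻¹).det * ((A g).charpoly.eval x))
          = (((-1 : ℂ) ^ n) * ((-1 : ℂ) ^ n)) * ((A g).det * (A g⁻¹).det) *
            ((A g).charpoly.eval x * (A g⁻¹).charpoly.eval x) := by ring
        _ = (A g).charpoly.eval x * (A g⁻¹).charpoly.eval x := by
            rw [hneg, hdet1, one_mul, one_mul]
    simp only [hdet]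
    show (k : ℂ)⁻¹ * _ = _
    rw [Finset.mul_sum, Finset.mul_sum, Finset.mul_sum]
    apply Finset.sum_congr rfl
    intro g _
    have hSx : (S g).eval x ≠ 0 := hxN x hx g
    have hDx : (D g).eval x = (-1 : ℂ) ^ (m g) * (1 - x) ^ (m g) * (S g).eval x := by
      conv_lhs => rw [← hfact g]
      rw [Polynomial.eval_mul, Polynomial.eval_pow, Polynomial.eval_sub,
        Polynomial.eval_X, Polynomial.eval_C]
      rw [show x - 1 = -(1 - x) by ring, neg_pow]
    have hne1 : ((-1 : ℂ) ^ (m g)) ≠ 0 := pow_ne_zero _ (by norm_num)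
    have hne2 : ((1 : ℂ) - x) ^ (m g) ≠ 0 := pow_ne_zero _ hx1
    have hDxne : (D g).eval x ≠ 0 := by
      rw [hDx]; exact mul_ne_zero (mul_ne_zero hne1 hne2) hSx
    have hneg : (-1 : ℂ) ^ (m g) * (-1 : ℂ) ^ (m g) = 1 := by
      rw [← pow_add, ← two_mul]
      exact Even.neg_one_pow (even_two_mul _)
    have key : ((-1 : ℂ) ^ (m g) * (1 - x) ^ (2 * n - m g) * ((S g).eval x)⁻¹)
        * (D g).eval x = (1 - x) ^ (2 * n) := by
      rw [hDx]
      calc ((-1 : ℂ) ^ (m g) * (1 - x) ^ (2 * n - m g) * ((S g).eval x)⁻¹)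
            * ((-1 : ℂ) ^ (m g) * (1 - x) ^ (m g) * (S g).eval x)
          = ((-1 : ℂ) ^ (m g) * (-1 : ℂ) ^ (m g))
              * ((1 - x) ^ (2 * n - m g) * (1 - x) ^ (m g))
              * (((S g).eval x)⁻¹ * (S g).eval x) := by ring
        _ = (1 - x) ^ (2 * n) := by
            rw [hneg, inv_mul_cancel₀ hSx, one_mul, mul_one, ← pow_add,
              Nat.sub_add_cancel (hmle g)]
    have step1 : ((-1 : ℂ) ^ (m g) * (1 - x) ^ (2 * n - m g) * ((S g).eval x)⁻¹)
        * (D g).eval x * ((D g).eval x)⁻¹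
        = (-1 : ℂ) ^ (m g) * (1 - x) ^ (2 * n - m g) * ((S g).eval x)⁻¹ := by
      rw [mul_assoc, mul_inv_cancel₀ hDxne, mul_one]
    conv_lhs => rw [← step1]
    rw [key]
    ring
  · -- value at 1
    show (k : ℂ)⁻¹ * _ = (k : ℂ)⁻¹
    rw [show ∑ g : Γ, (-1 : ℂ) ^ (m g) * (1 - 1 : ℂ) ^ (2 * n - m g) * ((S g).eval 1)⁻¹
        = 1 from ?_, mul_one]
    rw [Finset.sum_eq_single_of_mem (1 : Γ) (Finset.mem_univ _)]
    · rw [hm1, hS1poly]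
      simp [Even.neg_one_pow (even_two_mul n)]
    · intro b _ hb
      have h2 : 2 * n - m b ≠ 0 := by have := hmlt b hb; omega
      rw [sub_self, zero_pow h2, mul_zero, zero_mul]
  · -- derivative at 1
    have hG' : HasDerivAt G 0 1 := by
      have hsum : HasDerivAt (fun x => ∑ g : Γ,
          (-1 : ℂ) ^ (m g) * (1 - x) ^ (2 * n - m g) * ((S g).eval x)⁻¹)
          (∑ _g : Γ, (0 : ℂ)) 1 := by
        apply HasDerivAt.fun_sum
        intro g _
        rcases eq_or_ne g 1 with rfl | hg
        · -- the identity term is constant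
          have h0 : 2 * n - m 1 = 0 := by rw [hm1]; omega
          have : (fun x : ℂ => (-1 : ℂ) ^ (m 1) * (1 - x) ^ (2 * n - m 1)
              * ((S 1).eval x)⁻¹) = fun _ => (-1 : ℂ) ^ (m 1) := by
            funext x
            rw [h0, pow_zero, hS1poly]
            simp
          rw [this]
          exact hasDerivAt_const _ _
        · have hk2 : 2 ≤ 2 * n - m g := by have := hmlt g hg; omega
          have hu : HasDerivAt (fun x : ℂ => (1 - x) ^ (2 * n - m g))
              ((2 * n - m g : ℕ) * ((1:ℂ) - 1) ^ (2 * n - m g - 1) * (-1)) 1 :=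
            ((hasDerivAt_id (1:ℂ)).const_sub 1).pow _
          have hv : HasDerivAt (fun x : ℂ => ((S g).eval x)⁻¹)
              (-(Polynomial.derivative (S g)).eval 1 / ((S g).eval 1) ^ 2) 1 :=
            ((S g).hasDerivAt 1).inv (hS1 g)
          have := ((hu.const_mul ((-1 : ℂ) ^ (m g))).mul hv)
          have hz1 : ((1:ℂ) - 1) ^ (2 * n - m g - 1) = 0 := by
            rw [sub_self]; exact zero_pow (by omega)
          have hz2 : ((1:ℂ) - 1) ^ (2 * n - m g) = 0 := by
            rw [sub_self]; exact zero_pow (by omega)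
          refine this.congr_deriv ?_
          rw [hz2, hz1]
          ring
      have := hsum.const_mul ((k : ℂ)⁻¹)
      simpa using this
    exact hG'.deriv
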